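/- Let F = (f_1,…,f_N) be a frame for an n-dimensional complex inner product space H with frame operator S_F, and let p > 1. Note that each ⟨f_i, S_F^{-1}f_i⟩ is a nonnegative real number. Set M := max_{1≤i≤N} Re⟨f_i, S_F^{-1}f_i⟩, I₁ := {i : Re⟨f_i, S_F^{-1}f_i⟩ = M}, I₂ := {1,…,N} \ I₁, and H_j := span{f_i : i ∈ I_j} for j = 1,2. Assume: (i) H₁ ∩ H₂ = {0}; (ii) the family {f_i : i ∈ I₂} is linearly independent. Then the canonical dual S_F^{-1}F is a 1-erasure spectrally optimal dual of F, i.e., ((1/N)∑_{i=1}^N |⟨f_i, S_F^{-1}f_i⟩|^p)^{1/p} ≤ ((1/N)∑_{i=1}^N |⟨f_i, g_i⟩|^p)^{1/p} for every dual frame G = (g_1,…,g_N) of F. -/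

import Mathlib

open scoped ComplexInnerProductSpace

/-- Let `F` be a frame for an `n`-dimensional complex inner
product space `H` with frame operator `S_F` (encoded through its inverse `Sinv`),
and let `p > 1`.  Set `M := max i, Re ⟨f i, Sinv (f i)⟩`, let
`I₁ = {i : Re ⟨f i, Sinv (f i)⟩ = M}`, `I₂` its complement.  Assume
(i) `span{f i : i ∈ I₁} ∩ span{f i : i ∈ I₂} = {0}`; (ii) `{f i : i ∈ I₂}` is
linearly independent.  Then the canonical dual `(Sinv (f i))` is a `1`-erasure
spectrally optimal dual of `F`.  (The paper's `⟨f i, Sinv (f i)⟩` is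
`⟪Sinv (f i), f i⟫`.) -/
theorem stmt_15 {H : Type*} [NormedAddCommGroup H] [InnerProductSpace ℂ H]
    [FiniteDimensional ℂ H] (n N : ℕ) (hn : Module.finrank ℂ H = n)
    (f : Fin N → H)
    (hframe : Submodule.span ℂ (Set.range f) = ⊤)
    (Sinv : H →ₗ[ℂ] H)
    (hSinv₁ : ∀ x : H, ∑ i, ⟪f i, Sinv x⟫ • f i = x)
    (hSinv₂ : ∀ x : H, Sinv (∑ i, ⟪f i, x⟫ • f i) = x)
    (p : ℝ) (hp : 1 < p)
    (M : ℝ)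
    (hMmax : IsGreatest (Set.range fun i => (⟪Sinv (f i), f i⟫).re) M)
    (hinter : Submodule.span ℂ (f '' {i | (⟪Sinv (f i), f i⟫).re = M}) ⊓
        Submodule.span ℂ (f '' {i | (⟪Sinv (f i), f i⟫).re ≠ M}) = ⊥)
    (hli : LinearIndependent ℂ
        (fun i : {i : Fin N // (⟪Sinv (f i), f i⟫).re ≠ M} => f (i : Fin N))) :
    ∀ g : Fin N → H, (∀ x : H, x = ∑ i, ⟪f i, x⟫ • g i) →
      ((1 / (N : ℝ)) * ∑ i, ‖⟪Sinv (f i), f i⟫‖ ^ p) ^ (1 / p) ≤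
        ((1 / (N : ℝ)) * ∑ i, ‖⟪g i, f i⟫‖ ^ p) ^ (1 / p) := by
  classical
  intro g hg
  -- canonical dual reconstruction
  have hcan : ∀ x : H, ∑ i, ⟪f i, x⟫ • Sinv (f i) = x := by
    intro x
    have h2 := hSinv₂ x
    rw [map_sum] at h2
    simpa [LinearMap.map_smul] using h2
  set h : Fin N → H := fun i => g i - Sinv (f i) with hh
  have hzero : ∀ x : H, ∑ i, ⟪f i, x⟫ • h i = 0 := by
    intro x
    have : ∑ i, ⟪f i, x⟫ • h i
        = (∑ i, ⟪f i, x⟫ • g i) - ∑ i, ⟪f i, x⟫ • Sinv (f i) := by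
      rw [← Finset.sum_sub_distrib]
      exact Finset.sum_congr rfl fun i _ => smul_sub _ _ _
    rw [this, ← hg x, hcan x, sub_self]
  -- key identity
  have hkey : ∀ y : H, ∑ i, ⟪h i, y⟫ • f i = 0 := by
    intro y
    have hvx : ∀ x : H, (⟪∑ i, ⟪h i, y⟫ • f i, x⟫ : ℂ) = 0 := by
      intro x
      have h1 : ∑ i, ⟪f i, x⟫ * ⟪y, h i⟫ = 0 := by
        have := congrArg (fun w => (⟪y, w⟫ : ℂ)) (hzero x)
        simpa [inner_sum, inner_smul_right, mul_comm] using this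
      rw [sum_inner]
      calc ∑ i, (⟪⟪h i, y⟫ • f i, x⟫ : ℂ)
          = ∑ i, ⟪f i, x⟫ * ⟪y, h i⟫ := by
            refine Finset.sum_congr rfl fun i _ => ?_
            rw [inner_smul_left, inner_conj_symm, mul_comm]
        _ = 0 := h1
    exact inner_self_eq_zero.mp (hvx _)
  -- the two index sets
  set P : Fin N → Prop := fun i => (⟪Sinv (f i), f i⟫).re = M with hP
  set s : Finset (Fin N) := Finset.univ.filter P with hs
  set t : Finset (Fin N) := Finset.univ.filter (fun i => ¬ P i) with ht
  have hsum_st : ∀ (F : Fin N → H), ∑ i, F i = ∑ i ∈ s, F i + ∑ i ∈ t, F i := by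
    intro F
    rw [hs, ht, Finset.sum_filter_add_sum_filter_not]
  -- the t-part of the key identity vanishes
  have hsplit : ∀ y : H, ∑ i ∈ t, ⟪h i, y⟫ • f i = 0 := by
    intro y
    set w : H := ∑ i ∈ t, ⟪h i, y⟫ • f i with hw
    have hw2 : w ∈ Submodule.span ℂ (f '' {i | (⟪Sinv (f i), f i⟫).re ≠ M}) := by
      refine Submodule.sum_mem _ fun i hi => Submodule.smul_mem _ _ ?_
      refine Submodule.subset_span ⟨i, ?_, rfl⟩
      simpa [ht, hP] using hi
    have hw1 : w ∈ Submodule.span ℂ (f '' {i | (⟪Sinv (f i), f i⟫).re = M}) := by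
      have heq : (∑ i ∈ s, ⟪h i, y⟫ • f i) + w = 0 := by
        rw [hw, ← hsum_st, hkey y]
      have : w = - ∑ i ∈ s, ⟪h i, y⟫ • f i := by
        rw [eq_neg_iff_add_eq_zero, add_comm]; exact heq
      rw [this]
      refine Submodule.neg_mem _ (Submodule.sum_mem _ fun i hi => Submodule.smul_mem _ _ ?_)
      refine Submodule.subset_span ⟨i, ?_, rfl⟩
      simpa [hs, hP] using hi
    have : w ∈ (⊥ : Submodule ℂ H) := hinter ▸ Submodule.mem_inf.mpr ⟨hw1, hw2⟩
    simpa using this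
  -- h vanishes on I₂
  have hcoef : ∀ i : Fin N, ¬ P i → h i = 0 := by
    intro i hi
    have hz : ∀ y : H, (⟪h i, y⟫ : ℂ) = 0 := by
      intro y
      have h0 := hsplit y
      have h0' : ∑ j : {j : Fin N // (⟪Sinv (f j), f j⟫).re ≠ M},
          ⟪h (j : Fin N), y⟫ • f (j : Fin N) = 0 := by
        rw [← Finset.sum_subtype t (by intro x; simp [ht, hP]) (fun j => ⟪h j, y⟫ • f j)]
        exact h0
      exact Fintype.linearIndependent_iff.mp hli (fun j => ⟪h (j : Fin N), y⟫) h0' ⟨i, hi⟩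
    exact inner_self_eq_zero.mp (hz _)
  -- positivity of canonical diagonal entries
  have hreal : ∀ i : Fin N, ⟪Sinv (f i), f i⟫ =
      ((∑ j, Complex.normSq ⟪f j, Sinv (f i)⟫ : ℝ) : ℂ) := by
    intro i
    have h1 := hSinv₁ (f i)
    calc (⟪Sinv (f i), f i⟫ : ℂ) = ⟪Sinv (f i), ∑ j, ⟪f j, Sinv (f i)⟫ • f j⟫ := by rw [h1]
      _ = ∑ j, ⟪f j, Sinv (f i)⟫ * ⟪Sinv (f i), f j⟫ := by
          rw [inner_sum]; exact Finset.sum_congr rfl fun j _ => inner_smul_right _ _ _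
      _ = ∑ j, ((Complex.normSq ⟪f j, Sinv (f i)⟫ : ℝ) : ℂ) := by
          refine Finset.sum_congr rfl fun j _ => ?_
          rw [← inner_conj_symm (Sinv (f i)) (f j), Complex.mul_conj]
      _ = ((∑ j, Complex.normSq ⟪f j, Sinv (f i)⟫ : ℝ) : ℂ) := by push_cast; ring
  have hnonneg : ∀ i : Fin N, 0 ≤ (⟪Sinv (f i), f i⟫).re := by
    intro i
    rw [hreal i]
    simp only [Complex.ofReal_re]
    exact Finset.sum_nonneg fun j _ => Complex.normSq_nonneg _
  have hnorm : ∀ i : Fin N, ‖(⟪Sinv (f i), f i⟫ : ℂ)‖ = (⟪Sinv (f i), f i⟫).re := by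
    intro i
    rw [hreal i]
    simp only [Complex.norm_real, Complex.ofReal_re, Real.norm_eq_abs]
    exact abs_of_nonneg (by simpa [hreal i] using hnonneg i)
  -- trace identity
  have htrace : ∑ i, (⟪h i, f i⟫ : ℂ) = 0 := by
    set e := stdOrthonormalBasis ℂ H with he
    have expand : ∀ i, (⟪h i, f i⟫ : ℂ) = ∑ j, ⟪e j, f i⟫ * ⟪h i, e j⟫ := by
      intro i
      conv_lhs => rw [← e.sum_repr (f i)]
      rw [inner_sum]
      refine Finset.sum_congr rfl fun j _ => ?_
      rw [inner_smul_right, e.repr_apply_apply]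
    calc ∑ i, (⟪h i, f i⟫ : ℂ)
        = ∑ i, ∑ j, ⟪e j, f i⟫ * ⟪h i, e j⟫ := Finset.sum_congr rfl fun i _ => expand i
      _ = ∑ j, ∑ i, ⟪h i, e j⟫ * ⟪e j, f i⟫ := by
          rw [Finset.sum_comm]
          exact Finset.sum_congr rfl fun j _ => Finset.sum_congr rfl fun i _ => mul_comm _ _
      _ = ∑ j, (⟪e j, (0 : H)⟫ : ℂ) := by
          refine Finset.sum_congr rfl fun j _ => ?_
          rw [← hkey (e j), inner_sum]
          exact (Finset.sum_congr rfl fun i _ => (inner_smul_right _ _ _)).symm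
      _ = 0 := by simp
  -- decompose diagonal of g
  have hb : ∀ i : Fin N, (⟪g i, f i⟫ : ℂ) = ⟪h i, f i⟫ + ⟪Sinv (f i), f i⟫ := by
    intro i
    rw [← inner_add_left]
    congr 1
    simp [hh]
  have hbt : ∀ i ∈ t, (⟪g i, f i⟫ : ℂ) = ⟪Sinv (f i), f i⟫ := by
    intro i hi
    rw [hb i, hcoef i (by simpa [ht] using hi)]
    simp
  -- sum over s of g-diagonal
  have hsum_s : ∑ i ∈ s, (⟪g i, f i⟫ : ℂ) = ((s.card : ℝ) * M : ℝ) := by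
    have h1 : ∑ i ∈ s, (⟪h i, f i⟫ : ℂ) = 0 := by
      have h2 : ∑ i ∈ t, (⟪h i, f i⟫ : ℂ) = 0 := by
        refine Finset.sum_eq_zero fun i hi => ?_
        rw [hcoef i (by simpa [ht] using hi)]
        simp
      have h3 : ∑ i, (⟪h i, f i⟫ : ℂ) = ∑ i ∈ s, ⟪h i, f i⟫ + ∑ i ∈ t, ⟪h i, f i⟫ := by
        rw [hs, ht, Finset.sum_filter_add_sum_filter_not]
      rw [htrace, h2, add_zero] at h3
      exact h3.symm
    have h4 : ∑ i ∈ s, (⟪Sinv (f i), f i⟫ : ℂ) = ((s.card : ℝ) * M : ℝ) := by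
      have hterm : ∀ i ∈ s, (⟪Sinv (f i), f i⟫ : ℂ) = ((M : ℝ) : ℂ) := by
        intro i hi
        have hiP : (⟪Sinv (f i), f i⟫).re = M := by simpa [hs, hP] using hi
        have h5 : (⟪Sinv (f i), f i⟫ : ℂ) = ((⟪Sinv (f i), f i⟫).re : ℂ) := by
          rw [hreal i]; simp
        rw [h5, hiP]
      rw [Finset.sum_congr rfl hterm, Finset.sum_const, nsmul_eq_mul]
      push_cast; ring
    calc ∑ i ∈ s, (⟪g i, f i⟫ : ℂ) = ∑ i ∈ s, (⟪h i, f i⟫ + ⟪Sinv (f i), f i⟫) :=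
          Finset.sum_congr rfl fun i _ => hb i
      _ = ∑ i ∈ s, (⟪h i, f i⟫ : ℂ) + ∑ i ∈ s, ⟪Sinv (f i), f i⟫ := Finset.sum_add_distrib
      _ = ((s.card : ℝ) * M : ℝ) := by rw [h1, h4, zero_add]
  -- M nonneg and s nonempty
  obtain ⟨i₀, hi₀⟩ := hMmax.1
  have hM0 : 0 ≤ M := hi₀ ▸ hnonneg i₀
  have hi₀s : i₀ ∈ s := by simp [hs, hP, hi₀]
  have hcard : 0 < s.card := Finset.card_pos.mpr ⟨i₀, hi₀s⟩
  -- main sum inequality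
  have hAB : ∑ i, ‖(⟪Sinv (f i), f i⟫ : ℂ)‖ ^ p ≤ ∑ i, ‖(⟪g i, f i⟫ : ℂ)‖ ^ p := by
    have hsumA : ∀ (F : Fin N → ℝ), ∑ i, F i = ∑ i ∈ s, F i + ∑ i ∈ t, F i := by
      intro F; rw [hs, ht, Finset.sum_filter_add_sum_filter_not]
    rw [hsumA, hsumA]
    have hteq : ∑ i ∈ t, ‖(⟪Sinv (f i), f i⟫ : ℂ)‖ ^ p = ∑ i ∈ t, ‖(⟪g i, f i⟫ : ℂ)‖ ^ p :=
      Finset.sum_congr rfl fun i hi => by rw [hbt i hi]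
    rw [hteq]
    refine add_le_add ?_ (le_refl _)
    -- left part equals card * M^p
    have hseq : ∑ i ∈ s, ‖(⟪Sinv (f i), f i⟫ : ℂ)‖ ^ p = (s.card : ℝ) * M ^ p := by
      have hterm : ∀ i ∈ s, ‖(⟪Sinv (f i), f i⟫ : ℂ)‖ ^ p = M ^ p := by
        intro i hi
        have hiP : (⟪Sinv (f i), f i⟫).re = M := by simpa [hs, hP] using hi
        rw [hnorm i, hiP]
      rw [Finset.sum_congr rfl hterm, Finset.sum_const, nsmul_eq_mul]
    rw [hseq]
    -- Jensen
    set k : ℝ := (s.card : ℝ) with hk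
    have hk0 : 0 < k := by rw [hk]; exact_mod_cast hcard
    have hwsum : ∑ _i ∈ s, k⁻¹ = 1 := by
      rw [Finset.sum_const, nsmul_eq_mul, hk, mul_inv_cancel₀ (by exact_mod_cast hcard.ne')]
    have hjensen := Real.rpow_arith_mean_le_arith_mean_rpow s (fun _ => k⁻¹)
      (fun i => ‖(⟪g i, f i⟫ : ℂ)‖) (fun i _ => inv_nonneg.mpr hk0.le) hwsum
      (fun i _ => norm_nonneg _) hp.le
    -- lower bound the mean
    have hmean : M ≤ ∑ i ∈ s, k⁻¹ * ‖(⟪g i, f i⟫ : ℂ)‖ := by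
      rw [← Finset.mul_sum]
      have h5 : k * M ≤ ∑ i ∈ s, ‖(⟪g i, f i⟫ : ℂ)‖ := by
        have := norm_sum_le s (fun i => (⟪g i, f i⟫ : ℂ))
        rw [hsum_s] at this
        calc k * M = ‖((k * M : ℝ) : ℂ)‖ := by
              rw [Complex.norm_real, Real.norm_eq_abs, abs_of_nonneg (mul_nonneg hk0.le hM0)]
          _ ≤ ∑ i ∈ s, ‖(⟪g i, f i⟫ : ℂ)‖ := this
      calc M = k⁻¹ * (k * M) := by field_simp
        _ ≤ k⁻¹ * ∑ i ∈ s, ‖(⟪g i, f i⟫ : ℂ)‖ := by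
            exact mul_le_mul_of_nonneg_left h5 (inv_nonneg.mpr hk0.le)
    have hMp : M ^ p ≤ (∑ i ∈ s, k⁻¹ * ‖(⟪g i, f i⟫ : ℂ)‖) ^ p :=
      Real.rpow_le_rpow hM0 hmean (by linarith)
    have h6 : M ^ p ≤ ∑ i ∈ s, k⁻¹ * ‖(⟪g i, f i⟫ : ℂ)‖ ^ p := le_trans hMp hjensen
    rw [← Finset.mul_sum] at h6
    calc k * M ^ p ≤ k * (k⁻¹ * ∑ i ∈ s, ‖(⟪g i, f i⟫ : ℂ)‖ ^ p) :=
          mul_le_mul_of_nonneg_left h6 hk0.le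
      _ = ∑ i ∈ s, ‖(⟪g i, f i⟫ : ℂ)‖ ^ p := by field_simp
  -- conclude
  have hN0 : (0 : ℝ) ≤ 1 / (N : ℝ) := by positivity
  refine Real.rpow_le_rpow ?_ (mul_le_mul_of_nonneg_left hAB hN0) (by positivity)
  refine mul_nonneg hN0 (Finset.sum_nonneg fun i _ => ?_)
  exact Real.rpow_nonneg (norm_nonneg _) p
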